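/- Let A be an n×n real symmetric matrix with every diagonal entry nonzero such that dev(A)=−dev(A), and let B=(1/√2)[[1,1],[1,−1]]. Then A⊗B ∈ S(G⊠P₂) when A∈S(G), and dev(A⊗B)=dev(A)·{−1,1}=dev(A); hence q(G⊠P₂) ≤ q(A). -/

import Mathlib

open Matrix Kronecker

/-- `S(G)`: real symmetric matrices whose off-diagonal nonzero pattern is the edge set of `G`. -/
def inS {V : Type*} (G : SimpleGraph V) (A : Matrix V V ℝ) : Prop :=
  A.IsSymm ∧ ∀ i j, i ≠ j → (A i j ≠ 0 ↔ G.Adj i j)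

/-- `q(G)`: the minimum number of distinct eigenvalues among matrices in `S(G)`. -/
noncomputable def qGraph {V : Type*} [Fintype V] [DecidableEq V] (G : SimpleGraph V) : ℕ :=
  sInf {k : ℕ | ∃ A : Matrix V V ℝ, inS G A ∧ (spectrum ℝ A).ncard = k}

/-- The strong product of two simple graphs. -/
def strongProd {V W : Type*} (G : SimpleGraph V) (G' : SimpleGraph W) :
    SimpleGraph (V × W) where
  Adj p q := (p.1 = q.1 ∧ G'.Adj p.2 q.2) ∨ (p.2 = q.2 ∧ G.Adj p.1 q.1) ∨
      (G.Adj p.1 q.1 ∧ G'.Adj p.2 q.2)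
  symm := by
    constructor
    rintro p q (⟨h1, h2⟩ | ⟨h1, h2⟩ | ⟨h1, h2⟩)
    · exact Or.inl ⟨h1.symm, h2.symm⟩
    · exact Or.inr (Or.inl ⟨h1.symm, h2.symm⟩)
    · exact Or.inr (Or.inr ⟨h1.symm, h2.symm⟩)
  loopless := by
    constructor
    rintro p (⟨-, h⟩ | ⟨-, h⟩ | ⟨h, -⟩)
    · exact G'.ne_of_adj h rfl
    · exact G.ne_of_adj h rfl
    · exact G.ne_of_adj h rfl

lemma mem_spec {m : Type*} [Fintype m] [DecidableEq m] (M : Matrix m m ℝ) (x : ℝ) :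
    x ∈ spectrum ℝ M ↔ (x • (1 : Matrix m m ℝ) - M).det = 0 := by
  rw [spectrum.mem_iff, Matrix.isUnit_iff_isUnit_det, isUnit_iff_ne_zero, not_ne_iff,
    Algebra.algebraMap_eq_smul_one]

def sumProdEquiv (n : ℕ) : Fin n ⊕ Fin n ≃ Fin n × Fin 2 where
  toFun := Sum.elim (fun i => (i, 0)) (fun i => (i, 1))
  invFun := fun p => if p.2 = 0 then Sum.inl p.1 else Sum.inr p.1
  left_inv := by rintro (i | i) <;> simp
  right_inv := by rintro ⟨i, k⟩; fin_cases k <;> simp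

theorem stmt16 {n : ℕ} (G : SimpleGraph (Fin n)) (A : Matrix (Fin n) (Fin n) ℝ)
    (hA : inS G A) (hdiag : ∀ i, A i i ≠ 0)
    (hdev : -(spectrum ℝ A) = spectrum ℝ A)
    (B : Matrix (Fin 2) (Fin 2) ℝ) (hB : B = (Real.sqrt 2)⁻¹ • !![1, 1; 1, -1]) :
    inS (strongProd G (SimpleGraph.pathGraph 2)) (A ⊗ₖ B) ∧
      spectrum ℝ (A ⊗ₖ B) = spectrum ℝ A ∧
      qGraph (strongProd G (SimpleGraph.pathGraph 2)) ≤ (spectrum ℝ A).ncard := by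

  have hs2 : Real.sqrt 2 * Real.sqrt 2 = 2 := Real.mul_self_sqrt (by norm_num)
  have hs2pos : (0:ℝ) < Real.sqrt 2 := Real.sqrt_pos.2 (by norm_num)
  have hs2ne : Real.sqrt 2 ≠ 0 := ne_of_gt hs2pos
  have hBne : ∀ k l : Fin 2, B k l ≠ 0 := by
    intro k l; fin_cases k <;> fin_cases l <;>
      simp [hB] <;> positivity
  have hBsymm : B.IsSymm := by
    apply Matrix.IsSymm.ext; intro i j; fin_cases i <;> fin_cases j <;> simp [hB]
  -- Part 1 : inS
  have h1 : inS (strongProd G (SimpleGraph.pathGraph 2)) (A ⊗ₖ B) := by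
    constructor
    · apply Matrix.IsSymm.ext
      rintro ⟨i, k⟩ ⟨j, l⟩
      simp only [Matrix.kroneckerMap_apply]
      rw [hA.1.apply, hBsymm.apply]
    · rintro ⟨i, k⟩ ⟨j, l⟩ hne
      simp only [Matrix.kroneckerMap_apply, mul_ne_zero_iff]
      have hpath : ∀ k l : Fin 2, k ≠ l → (SimpleGraph.pathGraph 2).Adj k l := by
        intro k l h; rw [SimpleGraph.pathGraph_adj]; omega
      by_cases hij : i = j
      · subst hij
        have hkl : k ≠ l := by rintro rfl; exact hne rfl
        constructor
        · intro _; exact Or.inl ⟨rfl, hpath _ _ hkl⟩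
        · intro _; exact ⟨hdiag i, hBne k l⟩
      · rw [(hA.2 i j hij)]
        constructor
        · rintro ⟨hG, -⟩
          by_cases hkl : k = l
          · exact Or.inr (Or.inl ⟨hkl, hG⟩)
          · exact Or.inr (Or.inr ⟨hG, hpath _ _ hkl⟩)
        · rintro (⟨h, -⟩ | ⟨-, h⟩ | ⟨h, -⟩)
          · exact absurd h hij
          · exact ⟨h, hBne k l⟩
          · exact ⟨h, hBne k l⟩
  -- Part 2 : spectrum
  set Q : Matrix (Fin 2) (Fin 2) ℝ := !![1, 1; Real.sqrt 2 - 1, -(Real.sqrt 2 + 1)] with hQ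
  set D : Matrix (Fin 2) (Fin 2) ℝ := !![1, 0; 0, -1] with hD
  have hBQ : B * Q = Q * D := by
    ext i j
    fin_cases i <;> fin_cases j <;>
      · simp [hB, hQ, hD, Matrix.mul_apply, Fin.sum_univ_two]
        try field_simp
        try nlinarith [hs2]
  have hdetQ : Q.det ≠ 0 := by
    simp [hQ, Matrix.det_fin_two_of]
    nlinarith [hs2, hs2pos]
  set P : Matrix (Fin n × Fin 2) (Fin n × Fin 2) ℝ := (1 : Matrix (Fin n) (Fin n) ℝ) ⊗ₖ Q with hP
  have hdetP : P.det ≠ 0 := by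
    rw [hP, Matrix.det_kronecker]
    rw [Matrix.det_one, one_pow, one_mul]
    exact pow_ne_zero _ hdetQ
  have hcomm : (A ⊗ₖ B) * P = P * (A ⊗ₖ D) := by
    rw [hP, ← Matrix.mul_kronecker_mul, ← Matrix.mul_kronecker_mul, Matrix.mul_one,
      Matrix.one_mul, hBQ]
  have hdetEq : ∀ x : ℝ, (x • (1 : Matrix (Fin n × Fin 2) (Fin n × Fin 2) ℝ) - A ⊗ₖ B).det
      = (x • 1 - A ⊗ₖ D).det := by
    intro x
    have h : (x • (1 : Matrix (Fin n × Fin 2) (Fin n × Fin 2) ℝ) - A ⊗ₖ B) * P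
        = P * (x • 1 - A ⊗ₖ D) := by
      rw [sub_mul, mul_sub, hcomm, smul_mul_assoc, mul_smul_comm, one_mul, mul_one]
    have := congrArg Matrix.det h
    rw [Matrix.det_mul, Matrix.det_mul] at this
    rw [mul_comm] at this
    exact mul_left_cancel₀ hdetP this
  have hsplit : ∀ x : ℝ, (x • (1 : Matrix (Fin n × Fin 2) (Fin n × Fin 2) ℝ) - A ⊗ₖ D).det
      = (x • 1 - A).det * (x • 1 + A).det := by
    intro x
    have hre : Matrix.reindex (sumProdEquiv n).symm (sumProdEquiv n).symm (x • (1 : Matrix (Fin n × Fin 2) (Fin n × Fin 2) ℝ) - A ⊗ₖ D)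
        = Matrix.fromBlocks (x • 1 - A) 0 0 (x • 1 + A) := by
      ext a b
      rcases a with i | i <;> rcases b with j | j <;>
        simp [sumProdEquiv, Matrix.reindex_apply, Matrix.submatrix_apply, hD,
          Matrix.one_apply, Prod.ext_iff] <;>
        by_cases hij : i = j <;> simp [hij] <;> ring
    rw [← Matrix.det_reindex_self (sumProdEquiv n).symm, hre,
      Matrix.det_fromBlocks_zero₂₁]
  have hspec : spectrum ℝ (A ⊗ₖ B) = spectrum ℝ A := by
    ext x
    rw [mem_spec, hdetEq, hsplit, mul_eq_zero]
    have hneg : ((x • (1 : Matrix (Fin n) (Fin n) ℝ) + A).det = 0) ↔ -x ∈ spectrum ℝ A := by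
      rw [mem_spec]
      have : (-x) • (1 : Matrix (Fin n) (Fin n) ℝ) - A = -(x • 1 + A) := by
        rw [neg_smul]; abel
      rw [this, Matrix.det_neg, mul_eq_zero]
      simp [pow_ne_zero]
    have hflip : -x ∈ spectrum ℝ A ↔ x ∈ spectrum ℝ A := by
      rw [← hdev, Set.mem_neg, neg_neg, hdev]
    rw [hneg, hflip, ← mem_spec, or_self]
  refine ⟨h1, hspec, ?_⟩
  exact Nat.sInf_le ⟨A ⊗ₖ B, h1, by rw [hspec]⟩
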